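/- Let I be an iterated-integral symbol on a set S with values in a commutative ℚ-algebra A. Then for every m ≥ 0 and all a_0, a_1, ..., a_{m+1} ∈ S one has I(a_0; a_1, ..., a_m; a_{m+1}) = (−1)^m · I(a_{m+1}; a_m, ..., a_1; a_0). -/

import Mathlib

/-!
STATEMENT 0. An iterated-integral symbol on a set `S` with values in a commutative
ℚ-algebra `A` satisfies `I(a₀; a₁, …, a_m; a_{m+1}) = (−1)^m · I(a_{m+1}; a_m, …, a₁; a₀)`.
-/

/-- The multiset of all shuffles of two lists. -/
def shuffles {α : Type*} : List α → List α → Multiset (List α)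
  | [], l => {l}
  | x :: l, [] => {x :: l}
  | a :: l, b :: m =>
      ((shuffles l (b :: m)).map (a :: ·)) + ((shuffles (a :: l) m).map (b :: ·))
  termination_by l m => l.length + m.length

/-- An iterated-integral symbol on a set `S` with values in a commutative ℚ-algebra `A`:
a function `I` assigning to `a, b ∈ S` and a finite sequence in `S` an element of `A`,
subject to (i) the unit relation, (ii) the shuffle product formula, (iii) the path
composition formula and (iv) loop vanishing. -/
structure IterIntSymbol (S : Type*) (A : Type*) [CommRing A] [Algebra ℚ A] where
  I : S → List S → S → A
  unit : ∀ a b : S, I a [] b = 1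
  shuffle_mul : ∀ (a b : S) (l₁ l₂ : List S),
    I a l₁ b * I a l₂ b = ((shuffles l₁ l₂).map fun w => I a w b).sum
  path_comp : ∀ (a b x : S) (l : List S),
    I a l b = ∑ k ∈ Finset.range (l.length + 1), I a (l.take k) x * I x (l.drop k) b
  loop : ∀ (a : S) (l : List S), l ≠ [] → I a l a = 0

lemma shuffles_nil_left {α : Type*} (v : List α) : shuffles [] v = {v} := by
  rw [shuffles]

lemma shuffles_nil_right {α : Type*} (u : List α) : shuffles u [] = {u} := by
  cases u <;> rw [shuffles]

lemma shuffles_cons_cons {α : Type*} (a b : α) (u v : List α) :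
    shuffles (a :: u) (b :: v)
      = ((shuffles u (b :: v)).map (a :: ·)) + ((shuffles (a :: u) v).map (b :: ·)) := by
  rw [shuffles]

lemma reverse_take_succ {α : Type*} (l : List α) (k : ℕ) (hk : k < l.length) :
    (l.take (k + 1)).reverse = l[k] :: (l.take k).reverse := by
  rw [List.take_succ, List.getElem?_eq_getElem hk]
  simp

/-- The key "antipode" identity: the signed sum of shuffles of a reversed prefix with the
complementary suffix vanishes for a nonempty list. -/
lemma key_antipode {S A : Type*} [CommRing A] (g : List S → A) (l : List S) (hl : l ≠ []) :
    ∑ k ∈ Finset.range (l.length + 1),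
      (-1 : A) ^ k * ((shuffles (l.take k).reverse (l.drop k)).map g).sum = 0 := by
  obtain ⟨x, t, hxt⟩ := List.exists_cons_of_ne_nil hl
  have hm1 : 1 ≤ l.length := by rw [hxt]; simp
  set m := l.length with hm
  set B : ℕ → A := fun k =>
    ((shuffles ((l.take k).reverse) (l.drop (k + 1))).map
      (fun w => g ((l.getD k x) :: w))).sum with hB
  have hstep : ∀ k ≤ m, ((shuffles (l.take k).reverse (l.drop k)).map g).sum
      = (if k = 0 then 0 else B (k - 1)) + (if k = m then 0 else B k) := by
    intro k hk
    match k, hk with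
    | 0, _ =>
      rw [if_pos rfl, if_neg (by omega), zero_add, hB]
      simp only [List.take_zero, List.reverse_nil, List.drop_zero, shuffles_nil_left,
        Multiset.map_singleton, Multiset.sum_singleton]
      rw [List.getD_eq_getElem l x (by omega),
        ← List.drop_eq_getElem_cons (show 0 < l.length by omega)]
      simp
    | (k + 1), hk =>
      rw [if_neg (by omega), Nat.add_sub_cancel]
      rcases eq_or_lt_of_le hk with heq | hlt
      · -- k + 1 = m
        rw [if_pos heq, add_zero]
        have hd : l.drop (k + 1) = [] := by rw [heq, hm]; exact List.drop_length
        rw [hd, shuffles_nil_right, reverse_take_succ l k (by omega), hB]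
        simp only
        rw [hd, shuffles_nil_right, List.getD_eq_getElem l x (by omega)]
        simp
      · -- k + 1 < m
        rw [if_neg (by omega)]
        rw [reverse_take_succ l k (by omega),
          List.drop_eq_getElem_cons (show k + 1 < l.length by omega), shuffles_cons_cons,
          Multiset.map_add, Multiset.sum_add, Multiset.map_map, Multiset.map_map]
        congr 1
        · rw [hB]
          simp only
          rw [List.drop_eq_getElem_cons (show k + 1 < l.length by omega),
            List.getD_eq_getElem l x (by omega)]
          rfl
        · rw [hB]
          simp only
          rw [reverse_take_succ l k (by omega), List.getD_eq_getElem l x (by omega)]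
          rfl
  have h3 : ∑ k ∈ Finset.range (m + 1),
        (-1 : A) ^ k * ((shuffles (l.take k).reverse (l.drop k)).map g).sum
      = ∑ k ∈ Finset.range (m + 1),
        (-1 : A) ^ k * ((if k = 0 then 0 else B (k - 1)) + (if k = m then 0 else B k)) :=
    Finset.sum_congr rfl fun k hk => by rw [hstep k (Finset.mem_range_succ_iff.mp hk)]
  rw [h3]
  simp only [mul_add]
  rw [Finset.sum_add_distrib,
    Finset.sum_range_succ' (fun k => (-1 : A) ^ k * (if k = 0 then 0 else B (k - 1))) m,
    Finset.sum_range_succ (fun k => (-1 : A) ^ k * (if k = m then 0 else B k)) m]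
  simp only [if_pos rfl, ite_true, ite_self, Nat.add_sub_cancel, Nat.succ_ne_zero, if_neg,
    if_false, ite_false, mul_zero, add_zero]
  rw [← Finset.sum_add_distrib]
  apply Finset.sum_eq_zero
  intro k hk
  have hkm : k ≠ m := by have := Finset.mem_range.mp hk; omega
  rw [if_neg hkm]
  ring

private lemma iterIntSymbol_reverse_aux {S A : Type*} [CommRing A] [Algebra ℚ A]
    (𝕀 : IterIntSymbol S A) :
    ∀ (n : ℕ) (l : List S), l.length ≤ n → ∀ a b : S,
      𝕀.I a l b = (-1 : A) ^ l.length * 𝕀.I b l.reverse a := by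
  intro n
  induction n with
  | zero =>
    intro l hl a b
    have : l = [] := List.eq_nil_of_length_eq_zero (Nat.le_zero.mp hl)
    subst this
    simp [𝕀.unit]
  | succ n ih =>
    intro l hl a b
    rcases eq_or_ne l [] with rfl | hne
    · simp [𝕀.unit]
    · set m := l.length with hm
      -- equation from loop vanishing and path composition
      have e1 := 𝕀.path_comp a a b l
      rw [𝕀.loop a l hne, Finset.sum_range_succ, List.take_length, List.drop_length,
        𝕀.unit, mul_one] at e1
      -- equation from the antipode identity
      have e2 := key_antipode (fun w => 𝕀.I b w a) l hne
      have e2' : ∑ k ∈ Finset.range m, 𝕀.I a (l.take k) b * 𝕀.I b (l.drop k) a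
          + (-1 : A) ^ m * 𝕀.I b l.reverse a = 0 := by
        rw [← e2, Finset.sum_range_succ, List.take_length, List.drop_length,
          shuffles_nil_right, Multiset.map_singleton, Multiset.sum_singleton]
        congr 1
        apply Finset.sum_congr rfl
        intro k hk
        have hkm : k < m := Finset.mem_range.mp hk
        rw [← 𝕀.shuffle_mul b a]
        have hrev : 𝕀.I b (l.take k).reverse a = (-1 : A) ^ k * 𝕀.I a (l.take k) b := by
          have hlen : (l.take k).reverse.length = k := by
            rw [List.length_reverse, List.length_take]
            omega
          rw [ih (l.take k).reverse (by rw [hlen]; omega) b a, hlen, List.reverse_reverse]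
        rw [hrev]
        have hone : (-1 : A) ^ k * (-1 : A) ^ k = 1 := by
          rw [← pow_add]
          exact Even.neg_one_pow ⟨k, rfl⟩
        linear_combination (-(𝕀.I a (l.take k) b * 𝕀.I b (l.drop k) a)) * hone
      linear_combination -e1 - e2'

theorem iterIntSymbol_reverse {S A : Type*} [CommRing A] [Algebra ℚ A]
    (𝕀 : IterIntSymbol S A) (a b : S) (l : List S) :
    𝕀.I a l b = (-1 : A) ^ l.length * 𝕀.I b l.reverse a := by
  exact iterIntSymbol_reverse_aux 𝕀 l.length l le_rfl a b
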